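/- Let X and Y be independent nonnegative real random variables such that X has the Fisher-Snedecor F density with parameters (m₁, m_{s1}, Ω₁) and Y has the Fisher-Snedecor F density with parameters (m₂, m_{s2}, Ω₂), where m₁, m₂ > 0, m_{s1}, m_{s2} > 1 and Ω₁, Ω₂ > 0. Then the variance of W = √X · √Y equals Var(W) = [(m_{s1}−1)(m_{s2}−1)·Ω₁·Ω₂ / (m₁·m₂·B(m₁,m_{s1})·B(m₂,m_{s2}))] · [ B(m₁+1, m_{s1}−1)·B(m₂+1, m_{s2}−1) − B(m₁+1/2, m_{s1}−1/2)²·B(m₂+1/2, m_{s2}−1/2)² / (B(m₁,m_{s1})·B(m₂,m_{s2})) ]. (Variance of the per-element cascaded channel amplitude W_n, Appendix A; stated here with the corrected sign so that Var(W) = E[X]E[Y] − (E[√X]E[√Y])² ≥ 0.) -/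

import Mathlib

open MeasureTheory ProbabilityTheory Real Set intervalIntegral
open scoped ENNReal NNReal

/-- Euler Beta function B(p,q) = Γ(p)Γ(q)/Γ(p+q). -/
noncomputable def eulerBeta (p q : ℝ) : ℝ := Real.Gamma p * Real.Gamma q / Real.Gamma (p + q)

/-- The Fisher-Snedecor F density with fading parameter m, shadowing parameter m_s
and mean power Ω. -/
noncomputable def fisherF (m ms Ω x : ℝ) : ℝ :=
  m ^ m * ((ms - 1) * Ω) ^ ms * x ^ (m - 1) /
    (eulerBeta m ms * (m * x + (ms - 1) * Ω) ^ (m + ms))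


lemma eulerBeta_pos {p q : ℝ} (hp : 0 < p) (hq : 0 < q) : 0 < eulerBeta p q :=
  div_pos (mul_pos (Real.Gamma_pos_of_pos hp) (Real.Gamma_pos_of_pos hq))
    (Real.Gamma_pos_of_pos (by positivity))

lemma betaIntegral_ofReal (a b : ℝ) :
    Complex.betaIntegral (a:ℂ) (b:ℂ)
      = ((∫ x in (0:ℝ)..1, x ^ (a-1) * (1-x) ^ (b-1) : ℝ) : ℂ) := by
  rw [Complex.betaIntegral, ← intervalIntegral.integral_ofReal]
  refine intervalIntegral.integral_congr_ae ?_
  have h1 : ∀ᵐ x : ℝ, x ≠ (1:ℝ) := by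
    rw [ae_iff]; simp only [ne_eq, not_not, Set.setOf_eq_eq_singleton]
    exact measure_singleton 1
  filter_upwards [h1] with x hx1 hx'
  rw [Set.uIoc_of_le zero_le_one] at hx'
  have hx0 : 0 < x := hx'.1
  have hx2 : x < 1 := lt_of_le_of_ne hx'.2 hx1
  rw [Complex.ofReal_mul, Complex.ofReal_cpow hx0.le, Complex.ofReal_cpow (by linarith)]
  push_cast
  ring_nf

lemma betaReal_eq (a b : ℝ) (ha : 0 < a) (hb : 0 < b) :
    ∫ x in (0:ℝ)..1, x ^ (a-1) * (1-x) ^ (b-1) = eulerBeta a b := by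
  have key := Complex.Gamma_mul_Gamma_eq_betaIntegral (s := (a:ℂ)) (t := (b:ℂ))
    (by simpa using ha) (by simpa using hb)
  rw [betaIntegral_ofReal] at key
  have hab : ((a:ℂ) + (b:ℂ)) = ((a+b : ℝ) : ℂ) := by push_cast; ring
  rw [hab, Complex.Gamma_ofReal, Complex.Gamma_ofReal, Complex.Gamma_ofReal,
    ← Complex.ofReal_mul, ← Complex.ofReal_mul] at key
  have := Complex.ofReal_inj.1 key
  have hG : Real.Gamma (a+b) ≠ 0 := (Real.Gamma_pos_of_pos (by positivity)).ne'
  rw [eulerBeta]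
  field_simp
  linarith [this]

lemma betaReal_integrableOn (a b : ℝ) (ha : 0 < a) (hb : 0 < b) :
    IntegrableOn (fun x => x ^ (a-1) * (1-x) ^ (b-1)) (Ioo (0:ℝ) 1) := by
  have hc := Complex.betaIntegral_convergent (u := (a:ℂ)) (v := (b:ℂ))
    (by simpa using ha) (by simpa using hb)
  have h2 : IntegrableOn (fun x : ℝ => ‖(x:ℂ) ^ ((a:ℂ)-1) * (1-(x:ℂ)) ^ ((b:ℂ)-1)‖) (Ioc 0 1) :=
    hc.1.norm
  refine (h2.mono_set Ioo_subset_Ioc_self).congr_fun_ae ?_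
  filter_upwards [self_mem_ae_restrict measurableSet_Ioo] with x hx
  have hx0 : 0 < x := hx.1
  have hx2 : x < 1 := hx.2
  simp only [norm_mul]
  have h1x : (0:ℝ) < 1 - x := by linarith
  have e1 : (1:ℂ) - (x:ℂ) = ((1 - x : ℝ) : ℂ) := by push_cast; ring
  rw [e1,
    Complex.norm_cpow_eq_rpow_re_of_pos hx0, Complex.norm_cpow_eq_rpow_re_of_pos h1x]
  norm_num

section Bsec
variable (a b : ℝ)

private lemma g_img : (fun u : ℝ => u / (1 - u)) '' Ioo 0 1 = Ioi 0 := by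
  ext y
  constructor
  · rintro ⟨u, hu, rfl⟩
    exact div_pos hu.1 (by linarith [hu.2])
  · intro hy
    have hy' : 0 < y := hy
    refine ⟨y / (1 + y), ⟨div_pos hy' (by linarith), ?_⟩, ?_⟩
    · rw [div_lt_one (by linarith)]; linarith
    · have h1 : (0:ℝ) < 1 + y := by linarith
      field_simp
      ring

private lemma g_deriv : ∀ u ∈ Ioo (0:ℝ) 1,
    HasDerivWithinAt (fun u : ℝ => u / (1 - u)) (((1 - u) ^ 2)⁻¹) (Ioo 0 1) u := by
  intro u hu
  have h1 : (1:ℝ) - u ≠ 0 := by have := hu.2; intro h; linarith [sub_eq_zero.mp h]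
  have : HasDerivAt (fun u : ℝ => u / (1 - u))
      ((1 * (1 - u) - u * (0 - 1)) / (1 - u) ^ 2) u :=
    (hasDerivAt_id u).div ((hasDerivAt_const u 1).sub (hasDerivAt_id u)) h1
  have e : ((1 - u) ^ 2)⁻¹ = (1 * (1 - u) - u * (0 - 1)) / (1 - u) ^ 2 := by ring
  rw [e]; exact this.hasDerivWithinAt

private lemma g_inj : InjOn (fun u : ℝ => u / (1 - u)) (Ioo 0 1) := by
  intro u hu v hv h
  have h1 : (1:ℝ) - u ≠ 0 := by have := hu.2; intro h; linarith [sub_eq_zero.mp h]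
  have h2 : (1:ℝ) - v ≠ 0 := by have := hv.2; intro h; linarith [sub_eq_zero.mp h]
  field_simp at h
  linarith

private lemma smul_eq_on : ∀ u ∈ Ioo (0:ℝ) 1, (ha : 0 < a) → (hb : 0 < b) →
    |((1 - u) ^ 2)⁻¹| • ((u / (1 - u)) ^ (a - 1) * (1 + u / (1 - u)) ^ (-(a + b)))
      = u ^ (a - 1) * (1 - u) ^ (b - 1) := by
  intro u hu ha hb
  have hv : (0:ℝ) < 1 - u := by linarith [hu.2]
  have hu0 : (0:ℝ) < u := hu.1
  have e1 : 1 + u / (1 - u) = (1 - u)⁻¹ := by field_simp; ring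
  have e2 : u / (1 - u) = u * (1 - u)⁻¹ := div_eq_mul_inv u _
  rw [e1, e2, Real.mul_rpow hu0.le (by positivity), Real.inv_rpow hv.le,
    Real.inv_rpow hv.le, ← Real.rpow_neg hv.le, ← Real.rpow_neg hv.le, neg_neg,
    abs_of_pos (by positivity), smul_eq_mul]
  have e3 : ((1 - u) ^ 2)⁻¹ = (1 - u) ^ (-2 : ℝ) := by
    rw [← Real.rpow_natCast (1 - u) 2, ← Real.rpow_neg hv.le]; norm_num
  rw [e3]
  rw [show ((1-u) ^ (-2:ℝ) * (u ^ (a-1) * (1-u) ^ (-(a-1)) * (1-u) ^ (a+b)) : ℝ)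
      = u ^ (a-1) * ((1-u) ^ (-2:ℝ) * (1-u) ^ (-(a-1)) * (1-u) ^ (a+b)) by ring,
    ← Real.rpow_add hv, ← Real.rpow_add hv]
  congr 1
  ring

lemma betaIoi_integrableOn (ha : 0 < a) (hb : 0 < b) :
    IntegrableOn (fun x : ℝ => x ^ (a - 1) * (1 + x) ^ (-(a + b))) (Ioi 0) := by
  rw [← g_img]
  rw [integrableOn_image_iff_integrableOn_abs_deriv_smul measurableSet_Ioo g_deriv g_inj]
  refine (betaReal_integrableOn a b ha hb).congr_fun ?_ measurableSet_Ioo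
  intro u hu
  exact (smul_eq_on a b u hu ha hb).symm

lemma betaIoi_eq (ha : 0 < a) (hb : 0 < b) :
    ∫ x in Ioi (0:ℝ), x ^ (a - 1) * (1 + x) ^ (-(a + b)) = eulerBeta a b := by
  rw [← g_img]
  rw [integral_image_eq_integral_abs_deriv_smul measurableSet_Ioo g_deriv g_inj]
  rw [setIntegral_congr_fun measurableSet_Ioo (fun u hu => smul_eq_on a b u hu ha hb)]
  rw [← betaReal_eq a b ha hb, intervalIntegral.integral_of_le zero_le_one,
    integral_Ioc_eq_integral_Ioo]
end Bsec

section Moment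
variable {m ms Ω p : ℝ}

lemma moment_key (hm : 0 < m) (hms : 1 < ms) (hΩ : 0 < Ω) : ∀ x ∈ Ioi (0:ℝ),
    x ^ p * fisherF m ms Ω x
      = (m ^ m * ((ms-1)*Ω) ^ ms / eulerBeta m ms * (m/((ms-1)*Ω)) ^ (1-(m+p))
          * ((ms-1)*Ω) ^ (-(m+ms)))
        * ((m/((ms-1)*Ω)*x) ^ ((m+p)-1) * (1 + m/((ms-1)*Ω)*x) ^ (-((m+p)+(ms-p)))) := by
  intro x hx
  have hx0 : (0:ℝ) < x := hx
  set c : ℝ := (ms-1)*Ω with hc_def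
  have hms1 : (0:ℝ) < ms - 1 := by linarith
  have hc : 0 < c := by positivity
  have hB : 0 < eulerBeta m ms := eulerBeta_pos hm (by linarith)
  have hd : 0 < m * x + c := by positivity
  have hk : (0:ℝ) < m / c := by positivity
  have e1 : 1 + m/c*x = (m*x + c) / c := by field_simp; ring
  have e2 : (m/c*x) ^ ((m+p)-1) = (m/c) ^ ((m+p)-1) * x ^ ((m+p)-1) :=
    Real.mul_rpow hk.le hx0.le
  have e3 : (1 + m/c*x) ^ (-((m+p)+(ms-p)))
      = ((m*x+c) ^ (m+ms))⁻¹ * c ^ (m+ms) := by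
    rw [e1, show -((m+p)+(ms-p)) = -(m+ms) by ring, Real.rpow_neg (by positivity),
      Real.div_rpow hd.le hc.le]
    field_simp
  have ex : x ^ p * x ^ (m-1) = x ^ ((m+p)-1) := by
    rw [← Real.rpow_add hx0]; congr 1; ring
  have ek : (m/c) ^ (1-(m+p)) * (m/c) ^ ((m+p)-1) = 1 := by
    rw [← Real.rpow_add hk, show 1-(m+p)+((m+p)-1) = 0 by ring, Real.rpow_zero]
  have ec : c ^ (-(m+ms)) * c ^ (m+ms) = 1 := by
    rw [← Real.rpow_add hc, show -(m+ms)+(m+ms) = 0 by ring, Real.rpow_zero]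
  rw [fisherF, e2, e3, ← hc_def]
  calc x ^ p * (m ^ m * c ^ ms * x ^ (m-1) / (eulerBeta m ms * (m*x+c) ^ (m+ms)))
      = (m ^ m * c ^ ms / eulerBeta m ms) * (x ^ p * x ^ (m-1))
          * ((m*x+c) ^ (m+ms))⁻¹ := by
        field_simp
    _ = (m ^ m * c ^ ms / eulerBeta m ms)
          * ((m/c) ^ (1-(m+p)) * (m/c) ^ ((m+p)-1)) * (c ^ (-(m+ms)) * c ^ (m+ms))
          * x ^ ((m+p)-1) * ((m*x+c) ^ (m+ms))⁻¹ := by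
        rw [ek, ec, ex]; ring
    _ = _ := by ring

lemma moment_const (hm : 0 < m) (hms : 1 < ms) (hΩ : 0 < Ω) :
    (m ^ m * ((ms-1)*Ω) ^ ms / eulerBeta m ms * (m/((ms-1)*Ω)) ^ (1-(m+p))
        * ((ms-1)*Ω) ^ (-(m+ms))) * (m/((ms-1)*Ω))⁻¹
      = ((ms-1)*Ω/m) ^ p / eulerBeta m ms := by
  set c : ℝ := (ms-1)*Ω with hc_def
  have hms1 : (0:ℝ) < ms - 1 := by linarith
  have hc : 0 < c := by positivity
  have hk : (0:ℝ) < m / c := by positivity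
  have hB : 0 < eulerBeta m ms := eulerBeta_pos hm (by linarith)
  have e1 : (m/c) ^ (1-(m+p)) * (m/c)⁻¹ = (c/m) ^ (m+p) := by
    rw [← Real.rpow_neg_one (m/c), ← Real.rpow_add hk,
      show 1-(m+p) + (-1) = -(m+p) by ring, Real.rpow_neg hk.le,
      ← Real.inv_rpow hk.le, inv_div]
  have em : m ^ m * (m ^ (m+p))⁻¹ = (m ^ p)⁻¹ := by
    rw [← Real.rpow_neg hm.le, ← Real.rpow_add hm, show m + -(m+p) = -p by ring,
      Real.rpow_neg hm.le]
  have ecc : c ^ ms * (c ^ (m+ms))⁻¹ * c ^ (m+p) = c ^ p := by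
    rw [← Real.rpow_neg hc.le, ← Real.rpow_add hc, ← Real.rpow_add hc,
      show ms + -(m+ms) + (m+p) = p by ring]
  calc (m ^ m * c ^ ms / eulerBeta m ms * (m/c) ^ (1-(m+p)) * c ^ (-(m+ms)))
        * (m/c)⁻¹
      = (m ^ m * c ^ ms / eulerBeta m ms * c ^ (-(m+ms)))
          * ((m/c) ^ (1-(m+p)) * (m/c)⁻¹) := by ring
    _ = (m ^ m * c ^ ms / eulerBeta m ms * c ^ (-(m+ms))) * (c ^ (m+p) / m ^ (m+p)) := by
        rw [e1, Real.div_rpow hc.le hm.le]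
    _ = (m ^ m * (m ^ (m+p))⁻¹) * (c ^ ms * (c ^ (m+ms))⁻¹ * c ^ (m+p))
          / eulerBeta m ms := by
        rw [Real.rpow_neg hc.le]; ring
    _ = (m ^ p)⁻¹ * c ^ p / eulerBeta m ms := by rw [em, ecc]
    _ = (c/m) ^ p / eulerBeta m ms := by
        rw [Real.div_rpow hc.le hm.le, div_eq_mul_inv (c ^ p), mul_comm]

lemma moment_integrableOn (hm : 0 < m) (hms : 1 < ms) (hΩ : 0 < Ω)
    (hp0 : 0 ≤ p) (hp : p < ms) :
    IntegrableOn (fun x => x ^ p * fisherF m ms Ω x) (Ioi 0) := by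
  have hms1 : (0:ℝ) < ms - 1 := by linarith
  have hk : (0:ℝ) < m / ((ms-1)*Ω) := by positivity
  have ha : 0 < m + p := by linarith
  have hb : 0 < ms - p := by linarith
  have hF := betaIoi_integrableOn (m+p) (ms-p) ha hb
  have hcomp : IntegrableOn
      (fun x : ℝ => (m/((ms-1)*Ω)*x) ^ ((m+p)-1) * (1 + m/((ms-1)*Ω)*x) ^ (-((m+p)+(ms-p))))
      (Ioi 0) := by
    have := (integrableOn_Ioi_comp_mul_left_iff
      (fun y : ℝ => y ^ ((m+p)-1) * (1 + y) ^ (-((m+p)+(ms-p)))) 0 hk).2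
    rw [mul_zero] at this
    exact this hF
  have hcm : IntegrableOn (fun x : ℝ =>
      (m ^ m * ((ms-1)*Ω) ^ ms / eulerBeta m ms * (m/((ms-1)*Ω)) ^ (1-(m+p))
          * ((ms-1)*Ω) ^ (-(m+ms)))
        * ((m/((ms-1)*Ω)*x) ^ ((m+p)-1) * (1 + m/((ms-1)*Ω)*x) ^ (-((m+p)+(ms-p)))))
      (Ioi 0) := hcomp.const_mul _
  exact hcm.congr_fun (fun x hx => (moment_key hm hms hΩ x hx).symm) measurableSet_Ioi

lemma moment_eq (hm : 0 < m) (hms : 1 < ms) (hΩ : 0 < Ω) (hp0 : 0 ≤ p) (hp : p < ms) :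
    ∫ x in Ioi (0:ℝ), x ^ p * fisherF m ms Ω x
      = ((ms-1)*Ω/m) ^ p * (eulerBeta (m+p) (ms-p) / eulerBeta m ms) := by
  have hms1 : (0:ℝ) < ms - 1 := by linarith
  have hk : (0:ℝ) < m / ((ms-1)*Ω) := by positivity
  have ha : 0 < m + p := by linarith
  have hb : 0 < ms - p := by linarith
  rw [setIntegral_congr_fun measurableSet_Ioi (moment_key hm hms hΩ)]
  rw [MeasureTheory.integral_const_mul, integral_comp_mul_left_Ioi
    (fun y : ℝ => y ^ ((m+p)-1) * (1 + y) ^ (-((m+p)+(ms-p)))) 0 hk, mul_zero,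
    betaIoi_eq (m+p) (ms-p) ha hb, smul_eq_mul, ← mul_assoc, moment_const hm hms hΩ]
  ring

end Moment

open MeasureTheory ProbabilityTheory
open scoped ENNReal NNReal

section Prob
variable {m ms Ω : ℝ}

lemma fisherF_measurable : Measurable (fisherF m ms Ω) := by
  unfold fisherF
  fun_prop

lemma fisherF_nonneg (hm : 0 < m) (hms : 1 < ms) (hΩ : 0 < Ω) {x : ℝ} (hx : 0 < x) :
    0 ≤ fisherF m ms Ω x := by
  have hms1 : (0:ℝ) < ms - 1 := by linarith
  have hB : 0 < eulerBeta m ms := eulerBeta_pos hm (by linarith)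
  unfold fisherF
  positivity

lemma fisher_norm (hm : 0 < m) (hms : 1 < ms) (hΩ : 0 < Ω) :
    ∫ x in Ioi (0:ℝ), fisherF m ms Ω x = 1 := by
  have h := moment_eq (p := 0) hm hms hΩ le_rfl (by linarith)
  have hB : 0 < eulerBeta m ms := eulerBeta_pos hm (by linarith)
  have e : ∫ x in Ioi (0:ℝ), fisherF m ms Ω x = ∫ x in Ioi (0:ℝ), x ^ (0:ℝ) * fisherF m ms Ω x :=
    (setIntegral_congr_fun measurableSet_Ioi
      (fun x _ => by rw [Real.rpow_zero, one_mul])).symm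
  rw [e, h, Real.rpow_zero, add_zero, sub_zero, one_mul, div_self hB.ne']

lemma fisher_isProb (hm : 0 < m) (hms : 1 < ms) (hΩ : 0 < Ω) :
    IsProbabilityMeasure ((volume.restrict (Ioi (0:ℝ))).withDensity
      (fun x => ENNReal.ofReal (fisherF m ms Ω x))) := by
  constructor
  rw [withDensity_apply _ MeasurableSet.univ, setLIntegral_univ]
  rw [← ofReal_integral_eq_lintegral_ofReal]
  · rw [fisher_norm hm hms hΩ]; simp
  · exact (moment_integrableOn (p := 0) hm hms hΩ le_rfl (by linarith)).congr_fun
      (fun x hx => by simp [Real.rpow_zero]) measurableSet_Ioi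
  · filter_upwards [ae_restrict_mem measurableSet_Ioi] with x hx
    exact fisherF_nonneg hm hms hΩ hx

lemma fisher_integral (hm : 0 < m) (hms : 1 < ms) (hΩ : 0 < Ω) (g : ℝ → ℝ) :
    ∫ y, g y ∂((volume.restrict (Ioi (0:ℝ))).withDensity
      (fun x => ENNReal.ofReal (fisherF m ms Ω x)))
      = ∫ x in Ioi (0:ℝ), g x * fisherF m ms Ω x := by
  have hf : AEMeasurable (fun x => (fisherF m ms Ω x).toNNReal)
      (volume.restrict (Ioi (0:ℝ))) :=
    (fisherF_measurable.real_toNNReal).aemeasurable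
  have : (fun x => ENNReal.ofReal (fisherF m ms Ω x))
      = fun x => ((fisherF m ms Ω x).toNNReal : ℝ≥0∞) := rfl
  rw [this, integral_withDensity_eq_integral_smul₀ hf g]
  refine integral_congr_ae ?_
  filter_upwards [ae_restrict_mem measurableSet_Ioi] with x hx
  rw [NNReal.smul_def, smul_eq_mul, Real.coe_toNNReal _ (fisherF_nonneg hm hms hΩ hx),
    mul_comm]

lemma fisher_integrable_iff (hm : 0 < m) (hms : 1 < ms) (hΩ : 0 < Ω) (g : ℝ → ℝ) :
    Integrable g ((volume.restrict (Ioi (0:ℝ))).withDensity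
      (fun x => ENNReal.ofReal (fisherF m ms Ω x)))
      ↔ IntegrableOn (fun x => g x * fisherF m ms Ω x) (Ioi (0:ℝ)) := by
  have hf : AEMeasurable (fun x => (fisherF m ms Ω x).toNNReal)
      (volume.restrict (Ioi (0:ℝ))) :=
    (fisherF_measurable.real_toNNReal).aemeasurable
  have h0 : (fun x => ENNReal.ofReal (fisherF m ms Ω x))
      = fun x => ((fisherF m ms Ω x).toNNReal : ℝ≥0∞) := rfl
  rw [h0, integrable_withDensity_iff_integrable_smul₀ hf]
  refine integrable_congr ?_
  filter_upwards [ae_restrict_mem measurableSet_Ioi] with x hx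
  rw [NNReal.smul_def, smul_eq_mul, Real.coe_toNNReal _ (fisherF_nonneg hm hms hΩ hx),
    mul_comm]

end Prob

section Main
variable {α : Type*} {mα : MeasurableSpace α}

lemma map_aemeasurable (P : Measure α) (X : α → ℝ) {m ms Ω : ℝ}
    (hm : 0 < m) (hms : 1 < ms) (hΩ : 0 < Ω)
    (hmap : Measure.map X P = (volume.restrict (Ioi (0:ℝ))).withDensity
      (fun x => ENNReal.ofReal (fisherF m ms Ω x))) : AEMeasurable X P := by
  by_contra h
  rw [Measure.map_of_not_aemeasurable h] at hmap
  have h1 := (fisher_isProb hm hms hΩ).measure_univ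
  rw [← hmap] at h1
  simp at h1

lemma EP_eq (P : Measure α) (X : α → ℝ) {m ms Ω : ℝ}
    (hm : 0 < m) (hms : 1 < ms) (hΩ : 0 < Ω)
    (hXm : AEMeasurable X P)
    (hmap : Measure.map X P = (volume.restrict (Ioi (0:ℝ))).withDensity
      (fun x => ENNReal.ofReal (fisherF m ms Ω x)))
    (g : ℝ → ℝ) (hg : Measurable g) :
    ∫ ω, g (X ω) ∂P = ∫ x in Ioi (0:ℝ), g x * fisherF m ms Ω x := by
  rw [← integral_map hXm hg.aestronglyMeasurable, hmap, fisher_integral hm hms hΩ]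

lemma IP_iff (P : Measure α) (X : α → ℝ) {m ms Ω : ℝ}
    (hm : 0 < m) (hms : 1 < ms) (hΩ : 0 < Ω)
    (hXm : AEMeasurable X P)
    (hmap : Measure.map X P = (volume.restrict (Ioi (0:ℝ))).withDensity
      (fun x => ENNReal.ofReal (fisherF m ms Ω x)))
    (g : ℝ → ℝ) (hg : Measurable g) :
    Integrable (fun ω => g (X ω)) P ↔
      IntegrableOn (fun x => g x * fisherF m ms Ω x) (Ioi (0:ℝ)) := by
  have := integrable_map_measure (f := X) (g := g) (μ := P)
    (by rw [hmap]; exact hg.aestronglyMeasurable) hXm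
  rw [hmap, fisher_integrable_iff hm hms hΩ] at this
  exact this.symm.trans (Iff.rfl)

lemma E1_eq (P : Measure α) (X : α → ℝ) {m ms Ω : ℝ}
    (hm : 0 < m) (hms : 1 < ms) (hΩ : 0 < Ω)
    (hXm : AEMeasurable X P)
    (hmap : Measure.map X P = (volume.restrict (Ioi (0:ℝ))).withDensity
      (fun x => ENNReal.ofReal (fisherF m ms Ω x))) :
    Integrable X P ∧ ∫ ω, X ω ∂P
      = (ms-1)*Ω/m * (eulerBeta (m+1) (ms-1) / eulerBeta m ms) := by
  have hcong : EqOn (fun x : ℝ => x ^ (1:ℝ) * fisherF m ms Ω x)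
      (fun x : ℝ => x * fisherF m ms Ω x) (Ioi 0) := fun x _ => by
    simp only [Real.rpow_one]
  constructor
  · exact (IP_iff P X hm hms hΩ hXm hmap id measurable_id).2
      ((moment_integrableOn (p := 1) hm hms hΩ zero_le_one hms).congr_fun hcong
        measurableSet_Ioi)
  · have h := EP_eq P X hm hms hΩ hXm hmap id measurable_id
    simp only [id] at h
    rw [h, ← setIntegral_congr_fun measurableSet_Ioi hcong,
      moment_eq (p := 1) hm hms hΩ zero_le_one hms, Real.rpow_one]

lemma Esqrt_eq (P : Measure α) (X : α → ℝ) {m ms Ω : ℝ}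
    (hm : 0 < m) (hms : 1 < ms) (hΩ : 0 < Ω)
    (hXm : AEMeasurable X P)
    (hmap : Measure.map X P = (volume.restrict (Ioi (0:ℝ))).withDensity
      (fun x => ENNReal.ofReal (fisherF m ms Ω x))) :
    Integrable (fun ω => Real.sqrt (X ω)) P ∧ ∫ ω, Real.sqrt (X ω) ∂P
      = ((ms-1)*Ω/m) ^ (1/2:ℝ) * (eulerBeta (m+1/2) (ms-1/2) / eulerBeta m ms) := by
  have hp0 : (0:ℝ) ≤ 1/2 := by norm_num
  have hp : (1/2:ℝ) < ms := by linarith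
  have hcong : EqOn (fun x : ℝ => x ^ (1/2:ℝ) * fisherF m ms Ω x)
      (fun x : ℝ => Real.sqrt x * fisherF m ms Ω x) (Ioi 0) := fun x _ => by
    simp only [Real.sqrt_eq_rpow]
  constructor
  · exact (IP_iff P X hm hms hΩ hXm hmap Real.sqrt Real.continuous_sqrt.measurable).2
      ((moment_integrableOn (p := 1/2) hm hms hΩ hp0 hp).congr_fun hcong measurableSet_Ioi)
  · rw [EP_eq P X hm hms hΩ hXm hmap Real.sqrt Real.continuous_sqrt.measurable,
      ← setIntegral_congr_fun measurableSet_Ioi hcong,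
      moment_eq (p := 1/2) hm hms hΩ hp0 hp]

end Main

/-- variance of the per-element cascaded channel amplitude W = √X·√Y with
independent Fisher-Snedecor F distributed X and Y (with the corrected sign). -/
theorem stmt5 {α : Type*} {mα : MeasurableSpace α} (P : Measure α) [IsProbabilityMeasure P]
    (X Y : α → ℝ) (hXY : IndepFun X Y P)
    (hX0 : ∀ᵐ ω ∂P, 0 ≤ X ω) (hY0 : ∀ᵐ ω ∂P, 0 ≤ Y ω)
    (m₁ m₂ ms₁ ms₂ Ω₁ Ω₂ : ℝ)
    (hm₁ : 0 < m₁) (hm₂ : 0 < m₂) (hms₁ : 1 < ms₁) (hms₂ : 1 < ms₂)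
    (hΩ₁ : 0 < Ω₁) (hΩ₂ : 0 < Ω₂)
    (hX : Measure.map X P
      = (volume.restrict (Ioi (0:ℝ))).withDensity
          (fun x => ENNReal.ofReal (fisherF m₁ ms₁ Ω₁ x)))
    (hY : Measure.map Y P
      = (volume.restrict (Ioi (0:ℝ))).withDensity
          (fun y => ENNReal.ofReal (fisherF m₂ ms₂ Ω₂ y))) :
    variance (fun ω => Real.sqrt (X ω) * Real.sqrt (Y ω)) P
      = ((ms₁ - 1) * (ms₂ - 1) * Ω₁ * Ω₂ /
          (m₁ * m₂ * eulerBeta m₁ ms₁ * eulerBeta m₂ ms₂)) *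
        (eulerBeta (m₁ + 1) (ms₁ - 1) * eulerBeta (m₂ + 1) (ms₂ - 1) -
          eulerBeta (m₁ + 1/2) (ms₁ - 1/2) ^ 2 * eulerBeta (m₂ + 1/2) (ms₂ - 1/2) ^ 2 /
            (eulerBeta m₁ ms₁ * eulerBeta m₂ ms₂)) := by
  have hXm : AEMeasurable X P := map_aemeasurable P X hm₁ hms₁ hΩ₁ hX
  have hYm : AEMeasurable Y P := map_aemeasurable P Y hm₂ hms₂ hΩ₂ hY
  obtain ⟨IX, EX⟩ := E1_eq P X hm₁ hms₁ hΩ₁ hXm hX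
  obtain ⟨IY, EY⟩ := E1_eq P Y hm₂ hms₂ hΩ₂ hYm hY
  obtain ⟨IsX, EsX⟩ := Esqrt_eq P X hm₁ hms₁ hΩ₁ hXm hX
  obtain ⟨IsY, EsY⟩ := Esqrt_eq P Y hm₂ hms₂ hΩ₂ hYm hY
  set W : α → ℝ := fun ω => Real.sqrt (X ω) * Real.sqrt (Y ω) with hW_def
  have hsqIndep : IndepFun (fun ω => Real.sqrt (X ω)) (fun ω => Real.sqrt (Y ω)) P :=
    hXY.comp Real.continuous_sqrt.measurable Real.continuous_sqrt.measurable
  have IXY : Integrable (fun ω => X ω * Y ω) P := hXY.integrable_mul IX IY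
  have hW2 : (fun ω => W ω ^ 2) =ᵐ[P] fun ω => X ω * Y ω := by
    filter_upwards [hX0, hY0] with ω h1 h2
    simp only [hW_def, mul_pow, Real.sq_sqrt h1, Real.sq_sqrt h2]
  have IW2 : Integrable (fun ω => W ω ^ 2) P := IXY.congr hW2.symm
  have hWasm : AEStronglyMeasurable W P :=
    ((Real.continuous_sqrt.measurable.comp_aemeasurable hXm).mul
      (Real.continuous_sqrt.measurable.comp_aemeasurable hYm)).aestronglyMeasurable
  have MemW : MeasureTheory.MemLp W 2 P := (memLp_two_iff_integrable_sq hWasm).2 IW2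
  rw [variance_eq_sub MemW]
  have e2 : ∫ ω, (W ^ 2) ω ∂P = (∫ ω, X ω ∂P) * ∫ ω, Y ω ∂P := by
    rw [show (∫ ω, (W ^ 2) ω ∂P) = ∫ ω, W ω ^ 2 ∂P from rfl,
      integral_congr_ae hW2,
      show (∫ ω, X ω * Y ω ∂P) = ∫ ω, (X * Y) ω ∂P from rfl,
      hXY.integral_mul_eq_mul_integral IX.aestronglyMeasurable IY.aestronglyMeasurable]
  have e1 : ∫ ω, W ω ∂P = (∫ ω, Real.sqrt (X ω) ∂P) * ∫ ω, Real.sqrt (Y ω) ∂P := by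
    rw [show (∫ ω, W ω ∂P)
        = ∫ ω, ((fun ω => Real.sqrt (X ω)) * (fun ω => Real.sqrt (Y ω))) ω ∂P from rfl,
      hsqIndep.integral_mul_eq_mul_integral IsX.aestronglyMeasurable IsY.aestronglyMeasurable]
  rw [e2, e1, EX, EY, EsX, EsY]
  set c₁ : ℝ := (ms₁-1)*Ω₁/m₁ with hc₁
  set c₂ : ℝ := (ms₂-1)*Ω₂/m₂ with hc₂
  have hc₁0 : 0 ≤ c₁ := div_nonneg (mul_nonneg (by linarith) hΩ₁.le) hm₁.le
  have hc₂0 : 0 ≤ c₂ := div_nonneg (mul_nonneg (by linarith) hΩ₂.le) hm₂.le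
  have hB₁ : 0 < eulerBeta m₁ ms₁ := eulerBeta_pos hm₁ (by linarith)
  have hB₂ : 0 < eulerBeta m₂ ms₂ := eulerBeta_pos hm₂ (by linarith)
  have sq₁ : (c₁ ^ (1/2:ℝ)) ^ 2 = c₁ := by
    rw [← Real.rpow_natCast (c₁ ^ (1/2:ℝ)) 2, ← Real.rpow_mul hc₁0]; norm_num
  have sq₂ : (c₂ ^ (1/2:ℝ)) ^ 2 = c₂ := by
    rw [← Real.rpow_natCast (c₂ ^ (1/2:ℝ)) 2, ← Real.rpow_mul hc₂0]; norm_num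
  rw [show (c₁ ^ (1/2:ℝ) * (eulerBeta (m₁+1/2) (ms₁-1/2) / eulerBeta m₁ ms₁)
        * (c₂ ^ (1/2:ℝ) * (eulerBeta (m₂+1/2) (ms₂-1/2) / eulerBeta m₂ ms₂))) ^ 2
      = (c₁ ^ (1/2:ℝ)) ^ 2 * (c₂ ^ (1/2:ℝ)) ^ 2
        * ((eulerBeta (m₁+1/2) (ms₁-1/2) / eulerBeta m₁ ms₁) ^ 2
          * (eulerBeta (m₂+1/2) (ms₂-1/2) / eulerBeta m₂ ms₂) ^ 2) from by ring,
    sq₁, sq₂, hc₁, hc₂]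
  field_simp
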